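/- Weak duality / optimality bound for OPA: if z ∈ ℝ and w_{ijr} ≥ 0 satisfy (∑_{h=r}^{K_{ij}} 1/h)·z ≤ t_i s_{ij} w_{ijr} for all (i,j,r) and ∑_{i,j,r} c_{ijr} w_{ijr} = 1, then z ≤ 1/(∑_{i,j,r} c_{ijr}(∑_{h=r}^{K_{ij}}1/h)/(t_i s_{ij})). -/

import Mathlib

open Finset

/-- Weak duality / optimality bound for OPA. -/
theorem stmt_11 (I J : ℕ) (hI : 0 < I) (hJ : 0 < J)
    (Kij : ℕ → ℕ → ℕ) (hKij : ∀ i j, 0 < Kij i j)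
    (t : ℕ → ℝ) (s : ℕ → ℕ → ℝ) (ht : ∀ i, 0 < t i) (hs : ∀ i j, 0 < s i j)
    (c : ℕ → ℕ → ℕ → ℝ) (hc : ∀ i j r, 0 < c i j r)
    (z : ℝ) (w : ℕ → ℕ → ℕ → ℝ) (hwnn : ∀ i j r, 0 ≤ w i j r)
    (hfeas : ∀ i ∈ Finset.Icc 1 I, ∀ j ∈ Finset.Icc 1 J, ∀ r ∈ Finset.Icc 1 (Kij i j),
      (∑ h ∈ Finset.Icc r (Kij i j), (1 : ℝ) / h) * z ≤ t i * s i j * w i j r)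
    (hnorm : ∑ i ∈ Finset.Icc 1 I, ∑ j ∈ Finset.Icc 1 J, ∑ r ∈ Finset.Icc 1 (Kij i j),
      c i j r * w i j r = 1) :
    z ≤ 1 / (∑ i ∈ Finset.Icc 1 I, ∑ j ∈ Finset.Icc 1 J, ∑ r ∈ Finset.Icc 1 (Kij i j),
      c i j r * (∑ h ∈ Finset.Icc r (Kij i j), (1 : ℝ) / h) / (t i * s i j)) := by
  have hts : ∀ i j, 0 < t i * s i j := fun i j => mul_pos (ht i) (hs i j)
  have hH : ∀ i j r, r ∈ Finset.Icc 1 (Kij i j) →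
      0 < ∑ h ∈ Finset.Icc r (Kij i j), (1:ℝ)/h := by
    intro i j r hr
    rw [Finset.mem_Icc] at hr
    apply Finset.sum_pos
    · intro h hh
      rw [Finset.mem_Icc] at hh
      have h0 : 0 < h := lt_of_lt_of_le hr.1 hh.1
      have : (0:ℝ) < h := by exact_mod_cast h0
      positivity
    · exact Finset.nonempty_Icc.2 hr.2
  have hDpos : 0 < ∑ i ∈ Finset.Icc 1 I, ∑ j ∈ Finset.Icc 1 J, ∑ r ∈ Finset.Icc 1 (Kij i j),
      c i j r * (∑ h ∈ Finset.Icc r (Kij i j), (1:ℝ)/h) / (t i * s i j) := by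
    apply Finset.sum_pos
    · intro i _
      apply Finset.sum_pos
      · intro j _
        apply Finset.sum_pos
        · intro r hr
          exact div_pos (mul_pos (hc i j r) (hH i j r hr)) (hts i j)
        · exact Finset.nonempty_Icc.2 (hKij i j)
      · exact Finset.nonempty_Icc.2 hJ
    · exact Finset.nonempty_Icc.2 hI
  rw [le_div_iff₀ hDpos, mul_comm, Finset.sum_mul]
  refine le_of_le_of_eq (Finset.sum_le_sum ?_) hnorm
  intro i hi
  rw [Finset.sum_mul]
  apply Finset.sum_le_sum
  intro j hj
  rw [Finset.sum_mul]
  apply Finset.sum_le_sum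
  intro r hr
  have h1 := hfeas i hi j hj r hr
  have hts' := hts i j
  have hc' := hc i j r
  calc c i j r * (∑ h ∈ Finset.Icc r (Kij i j), (1:ℝ)/h) / (t i * s i j) * z
      = (c i j r / (t i * s i j)) * ((∑ h ∈ Finset.Icc r (Kij i j), (1:ℝ)/h) * z) := by
        ring
    _ ≤ (c i j r / (t i * s i j)) * (t i * s i j * w i j r) :=
        mul_le_mul_of_nonneg_left h1 (le_of_lt (div_pos hc' hts'))
    _ = c i j r * w i j r := by
        field_simp
        field_simp [(ht i).ne', (hs i j).ne']
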